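/- The value V(π/4) = 2π ∫₀^{π/4} ∫_{−π/2}^{π/2} τ · sin(τ cos v) dv dτ satisfies 1.9473 < V(π/4) < 1.9474. (This is the volume Vol(B(R₂)) ≈ 1.94735865 of the ball of radius R₂ = π/4 in equation (2.9) of the paper.) -/

import Mathlib

open Real

open Set intervalIntegral in
/-- If `f 0 = 0` and the derivative of `f` is nonnegative on `[0, ∞)`,
then `f` is nonnegative on `[0, ∞)`. -/
lemma my_nonneg_of_deriv_nonneg {f f' : ℝ → ℝ} (hd : ∀ x, HasDerivAt f (f' x) x)
    (h0 : f 0 = 0) (hf' : ∀ x, 0 ≤ x → 0 ≤ f' x) {x : ℝ} (hx : 0 ≤ x) : 0 ≤ f x := by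
  have hm : MonotoneOn f (Ici (0:ℝ)) := by
    apply monotoneOn_of_deriv_nonneg (convex_Ici 0)
      (Continuous.continuousOn (continuous_iff_continuousAt.2 fun y ↦ (hd y).continuousAt))
    · intro y hy
      exact ((hd y).differentiableAt).differentiableWithinAt
    · intro y hy
      rw [(hd y).deriv]
      refine hf' y ?_
      have : y ∈ Ioi (0:ℝ) := by simpa [interior_Ici] using hy
      exact le_of_lt this
  have := hm self_mem_Ici (mem_Ici.2 hx) hx
  simpa [h0] using this

lemma my_sin_ge_cubic {x : ℝ} (hx : 0 ≤ x) : x - x ^ 3 / 6 ≤ Real.sin x := by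
  have := my_nonneg_of_deriv_nonneg (f := fun x => Real.sin x - (x - x ^ 3 / 6))
    (f' := fun x => Real.cos x - (1 - x ^ 2 / 2)) ?_ (by norm_num) ?_ hx
  · linarith
  · intro y
    have h1 : HasDerivAt (fun x : ℝ => x - x ^ 3 / 6) (1 - 3 * y ^ 2 / 6) y := by
      simpa using ((hasDerivAt_id y).fun_sub (((hasDerivAt_pow 3 y)).div_const 6))
    have := (Real.hasDerivAt_sin y).fun_sub h1
    refine this.congr_deriv ?_
    ring
  · intro y _
    have := Real.one_sub_sq_div_two_le_cos (x := y)
    linarith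

lemma my_cos_le_quartic {x : ℝ} (hx : 0 ≤ x) :
    Real.cos x ≤ 1 - x ^ 2 / 2 + x ^ 4 / 24 := by
  have := my_nonneg_of_deriv_nonneg (f := fun x => 1 - x ^ 2 / 2 + x ^ 4 / 24 - Real.cos x)
    (f' := fun x => Real.sin x - (x - x ^ 3 / 6)) ?_ (by norm_num) ?_ hx
  · linarith
  · intro y
    have h1 : HasDerivAt (fun x : ℝ => 1 - x ^ 2 / 2 + x ^ 4 / 24)
        (-(2 * y / 2) + 4 * y ^ 3 / 24) y := by
      simpa using (((hasDerivAt_const y (1:ℝ)).fun_sub ((hasDerivAt_pow 2 y).div_const 2)).fun_add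
        ((hasDerivAt_pow 4 y).div_const 24))
    have := h1.fun_sub (Real.hasDerivAt_cos y)
    refine this.congr_deriv ?_
    ring
  · intro y hy
    have := my_sin_ge_cubic hy
    linarith

lemma my_sin_le_quintic {x : ℝ} (hx : 0 ≤ x) :
    Real.sin x ≤ x - x ^ 3 / 6 + x ^ 5 / 120 := by
  have := my_nonneg_of_deriv_nonneg
    (f := fun x => x - x ^ 3 / 6 + x ^ 5 / 120 - Real.sin x)
    (f' := fun x => 1 - x ^ 2 / 2 + x ^ 4 / 24 - Real.cos x) ?_ (by norm_num) ?_ hx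
  · linarith
  · intro y
    have h1 : HasDerivAt (fun x : ℝ => x - x ^ 3 / 6 + x ^ 5 / 120)
        (1 - 3 * y ^ 2 / 6 + 5 * y ^ 4 / 120) y := by
      simpa using (((hasDerivAt_id y).fun_sub ((hasDerivAt_pow 3 y).div_const 6)).fun_add
        ((hasDerivAt_pow 5 y).div_const 120))
    have := h1.fun_sub (Real.hasDerivAt_sin y)
    refine this.congr_deriv ?_
    ring
  · intro y hy
    have := my_cos_le_quartic hy
    linarith

lemma my_cos_ge_sextic {x : ℝ} (hx : 0 ≤ x) :
    1 - x ^ 2 / 2 + x ^ 4 / 24 - x ^ 6 / 720 ≤ Real.cos x := by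
  have := my_nonneg_of_deriv_nonneg
    (f := fun x => Real.cos x - (1 - x ^ 2 / 2 + x ^ 4 / 24 - x ^ 6 / 720))
    (f' := fun x => (x - x ^ 3 / 6 + x ^ 5 / 120) - Real.sin x) ?_ (by norm_num) ?_ hx
  · linarith
  · intro y
    have h1 : HasDerivAt (fun x : ℝ => 1 - x ^ 2 / 2 + x ^ 4 / 24 - x ^ 6 / 720)
        (-(2 * y / 2) + 4 * y ^ 3 / 24 - 6 * y ^ 5 / 720) y := by
      simpa using ((((hasDerivAt_const y (1:ℝ)).fun_sub ((hasDerivAt_pow 2 y).div_const 2)).fun_add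
        ((hasDerivAt_pow 4 y).div_const 24)).fun_sub ((hasDerivAt_pow 6 y).div_const 720))
    have := (Real.hasDerivAt_cos y).fun_sub h1
    refine this.congr_deriv ?_
    ring
  · intro y hy
    have := my_sin_le_quintic hy
    linarith

lemma my_sin_ge_septic {x : ℝ} (hx : 0 ≤ x) :
    x - x ^ 3 / 6 + x ^ 5 / 120 - x ^ 7 / 5040 ≤ Real.sin x := by
  have := my_nonneg_of_deriv_nonneg
    (f := fun x => Real.sin x - (x - x ^ 3 / 6 + x ^ 5 / 120 - x ^ 7 / 5040))
    (f' := fun x => Real.cos x - (1 - x ^ 2 / 2 + x ^ 4 / 24 - x ^ 6 / 720)) ?_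
    (by norm_num) ?_ hx
  · linarith
  · intro y
    have h1 : HasDerivAt (fun x : ℝ => x - x ^ 3 / 6 + x ^ 5 / 120 - x ^ 7 / 5040)
        (1 - 3 * y ^ 2 / 6 + 5 * y ^ 4 / 120 - 7 * y ^ 6 / 5040) y := by
      simpa using ((((hasDerivAt_id y).fun_sub ((hasDerivAt_pow 3 y).div_const 6)).fun_add
        ((hasDerivAt_pow 5 y).div_const 120)).fun_sub ((hasDerivAt_pow 7 y).div_const 5040))
    have := (Real.hasDerivAt_sin y).fun_sub h1
    refine this.congr_deriv ?_
    ring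
  · intro y hy
    have := my_cos_ge_sextic hy
    linarith

/-- Value of the inner polynomial lower-bound integral. -/
lemma my_inner_low (τ : ℝ) :
    (∫ v in (-(π / 2))..(π / 2),
        τ * ((τ * Real.cos v) - (τ * Real.cos v) ^ 3 / 6 + (τ * Real.cos v) ^ 5 / 120
          - (τ * Real.cos v) ^ 7 / 5040))
      = 2 * τ ^ 2 - 2 / 9 * τ ^ 4 + 2 / 225 * τ ^ 6 - 2 / 11025 * τ ^ 8 := by
  have key : ∀ v : ℝ, HasDerivAt (fun v : ℝ =>
      τ ^ 2 * Real.sin v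
      - τ ^ 4 / 6 * (Real.sin v - Real.sin v ^ 3 / 3)
      + τ ^ 6 / 120 * (Real.sin v - 2 / 3 * Real.sin v ^ 3 + Real.sin v ^ 5 / 5)
      - τ ^ 8 / 5040 * (Real.sin v - Real.sin v ^ 3 + 3 / 5 * Real.sin v ^ 5
          - Real.sin v ^ 7 / 7))
      (τ * ((τ * Real.cos v) - (τ * Real.cos v) ^ 3 / 6 + (τ * Real.cos v) ^ 5 / 120
          - (τ * Real.cos v) ^ 7 / 5040)) v := by
    intro v
    have hs := Real.hasDerivAt_sin v
    have h3 : HasDerivAt (fun v : ℝ => Real.sin v ^ 3) (3 * Real.sin v ^ 2 * Real.cos v) v := by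
      simpa using hs.fun_pow 3
    have h5 : HasDerivAt (fun v : ℝ => Real.sin v ^ 5) (5 * Real.sin v ^ 4 * Real.cos v) v := by
      simpa using hs.fun_pow 5
    have h7 : HasDerivAt (fun v : ℝ => Real.sin v ^ 7) (7 * Real.sin v ^ 6 * Real.cos v) v := by
      simpa using hs.fun_pow 7
    have H := (((hs.const_mul (τ ^ 2)).fun_sub
        ((hs.fun_sub (h3.div_const 3)).const_mul (τ ^ 4 / 6))).fun_add
        ((((hs.fun_sub (h3.const_mul (2/3 : ℝ))).fun_add (h5.div_const 5)).const_mul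
          (τ ^ 6 / 120)))).fun_sub
        ((((hs.fun_sub h3).fun_add (h5.const_mul (3/5 : ℝ))).fun_sub (h7.div_const 7)).const_mul
          (τ ^ 8 / 5040))
    refine H.congr_deriv ?_
    have hc : Real.sin v ^ 2 = 1 - Real.cos v ^ 2 := Real.sin_sq v
    have h4 : Real.sin v ^ 4 = (1 - Real.cos v ^ 2) ^ 2 := by rw [← hc]; ring
    have h6 : Real.sin v ^ 6 = (1 - Real.cos v ^ 2) ^ 3 := by rw [← hc]; ring
    rw [hc, h4, h6]
    ring
  rw [intervalIntegral.integral_eq_sub_of_hasDerivAt (fun v _ => key v)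
    (by apply Continuous.intervalIntegrable; fun_prop)]
  simp [Real.sin_pi_div_two]
  ring

/-- Value of the inner polynomial upper-bound integral. -/
lemma my_inner_high (τ : ℝ) :
    (∫ v in (-(π / 2))..(π / 2),
        τ * ((τ * Real.cos v) - (τ * Real.cos v) ^ 3 / 6 + (τ * Real.cos v) ^ 5 / 120))
      = 2 * τ ^ 2 - 2 / 9 * τ ^ 4 + 2 / 225 * τ ^ 6 := by
  have key : ∀ v : ℝ, HasDerivAt (fun v : ℝ =>
      τ ^ 2 * Real.sin v
      - τ ^ 4 / 6 * (Real.sin v - Real.sin v ^ 3 / 3)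
      + τ ^ 6 / 120 * (Real.sin v - 2 / 3 * Real.sin v ^ 3 + Real.sin v ^ 5 / 5))
      (τ * ((τ * Real.cos v) - (τ * Real.cos v) ^ 3 / 6 + (τ * Real.cos v) ^ 5 / 120)) v := by
    intro v
    have hs := Real.hasDerivAt_sin v
    have h3 : HasDerivAt (fun v : ℝ => Real.sin v ^ 3) (3 * Real.sin v ^ 2 * Real.cos v) v := by
      simpa using hs.fun_pow 3
    have h5 : HasDerivAt (fun v : ℝ => Real.sin v ^ 5) (5 * Real.sin v ^ 4 * Real.cos v) v := by
      simpa using hs.fun_pow 5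
    have H := ((hs.const_mul (τ ^ 2)).fun_sub
        ((hs.fun_sub (h3.div_const 3)).const_mul (τ ^ 4 / 6))).fun_add
        ((((hs.fun_sub (h3.const_mul (2/3 : ℝ))).fun_add (h5.div_const 5)).const_mul (τ ^ 6 / 120)))
    refine H.congr_deriv ?_
    have hc : Real.sin v ^ 2 = 1 - Real.cos v ^ 2 := Real.sin_sq v
    have h4 : Real.sin v ^ 4 = (1 - Real.cos v ^ 2) ^ 2 := by rw [← hc]; ring
    rw [hc, h4]
    ring
  rw [intervalIntegral.integral_eq_sub_of_hasDerivAt (fun v _ => key v)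
    (by apply Continuous.intervalIntegrable; fun_prop)]
  simp [Real.sin_pi_div_two]
  ring

/-- The volume of the geodesic ball of radius `ρ` in `S² × ℝ` geometry
(Theorem 2.4 of the paper). -/
noncomputable def ballVol (ρ : ℝ) : ℝ :=
  2 * π * ∫ τ in (0 : ℝ)..ρ, ∫ v in (-(π / 2))..(π / 2), τ * Real.sin (τ * Real.cos v)

/-- The volume of the ball of radius `R₂ = π/4` (equation (2.9) of the paper):
`Vol(B(R₂)) ≈ 1.94735865`. -/
theorem ballVol_pi_div_four_bounds :
    1.9473 < ballVol (π / 4) ∧ ballVol (π / 4) < 1.9474 := by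
  have hpi : (0:ℝ) < π := Real.pi_pos
  have hpi2 : -(π / 2) ≤ π / 2 := by linarith
  have ha : (0:ℝ) ≤ π / 4 := by linarith
  -- continuity / integrability of the inner integral as a function of τ
  have hcont : Continuous fun τ : ℝ => ∫ v in (-(π / 2))..(π / 2),
      τ * Real.sin (τ * Real.cos v) := by
    apply intervalIntegral.continuous_parametric_intervalIntegral_of_continuous'
    fun_prop
  have hgint : IntervalIntegrable (fun τ : ℝ => ∫ v in (-(π / 2))..(π / 2),
      τ * Real.sin (τ * Real.cos v)) MeasureTheory.volume 0 (π / 4) :=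
    hcont.intervalIntegrable _ _
  -- lower bound of the inner integral, for 0 ≤ τ
  have hlow : ∀ τ : ℝ, 0 ≤ τ →
      2 * τ ^ 2 - 2 / 9 * τ ^ 4 + 2 / 225 * τ ^ 6 - 2 / 11025 * τ ^ 8
        ≤ ∫ v in (-(π / 2))..(π / 2), τ * Real.sin (τ * Real.cos v) := by
    intro τ hτ
    rw [← my_inner_low τ]
    refine intervalIntegral.integral_mono_on hpi2 ?_ ?_ ?_
    · apply Continuous.intervalIntegrable; fun_prop
    · apply Continuous.intervalIntegrable; fun_prop
    · intro v hv
      have hcv : 0 ≤ Real.cos v := Real.cos_nonneg_of_mem_Icc (by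
        constructor
        · exact hv.1
        · exact hv.2)
      have hx : 0 ≤ τ * Real.cos v := mul_nonneg hτ hcv
      exact mul_le_mul_of_nonneg_left (my_sin_ge_septic hx) hτ
  -- upper bound of the inner integral, for 0 ≤ τ
  have hhigh : ∀ τ : ℝ, 0 ≤ τ →
      (∫ v in (-(π / 2))..(π / 2), τ * Real.sin (τ * Real.cos v))
        ≤ 2 * τ ^ 2 - 2 / 9 * τ ^ 4 + 2 / 225 * τ ^ 6 := by
    intro τ hτ
    rw [← my_inner_high τ]
    refine intervalIntegral.integral_mono_on hpi2 ?_ ?_ ?_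
    · apply Continuous.intervalIntegrable; fun_prop
    · apply Continuous.intervalIntegrable; fun_prop
    · intro v hv
      have hcv : 0 ≤ Real.cos v := Real.cos_nonneg_of_mem_Icc (by
        constructor
        · exact hv.1
        · exact hv.2)
      have hx : 0 ≤ τ * Real.cos v := mul_nonneg hτ hcv
      exact mul_le_mul_of_nonneg_left (my_sin_le_quintic hx) hτ
  -- values of the outer polynomial integrals
  have houter_low : (∫ τ in (0:ℝ)..(π / 4),
      (2 * τ ^ 2 - 2 / 9 * τ ^ 4 + 2 / 225 * τ ^ 6 - 2 / 11025 * τ ^ 8))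
      = 2 / 3 * (π / 4) ^ 3 - 2 / 45 * (π / 4) ^ 5 + 2 / 1575 * (π / 4) ^ 7
        - 2 / 99225 * (π / 4) ^ 9 := by
    have key : ∀ τ : ℝ, HasDerivAt (fun τ : ℝ =>
        2 / 3 * τ ^ 3 - 2 / 45 * τ ^ 5 + 2 / 1575 * τ ^ 7 - 2 / 99225 * τ ^ 9)
        (2 * τ ^ 2 - 2 / 9 * τ ^ 4 + 2 / 225 * τ ^ 6 - 2 / 11025 * τ ^ 8) τ := by
      intro τ
      have H := ((((hasDerivAt_pow 3 τ).const_mul (2/3 : ℝ)).fun_sub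
          ((hasDerivAt_pow 5 τ).const_mul (2/45 : ℝ))).fun_add
          ((hasDerivAt_pow 7 τ).const_mul (2/1575 : ℝ))).fun_sub
          ((hasDerivAt_pow 9 τ).const_mul (2/99225 : ℝ))
      refine H.congr_deriv ?_
      push_cast
      ring
    rw [intervalIntegral.integral_eq_sub_of_hasDerivAt (fun τ _ => key τ)
      (by apply Continuous.intervalIntegrable; fun_prop)]
    norm_num
  have houter_high : (∫ τ in (0:ℝ)..(π / 4),
      (2 * τ ^ 2 - 2 / 9 * τ ^ 4 + 2 / 225 * τ ^ 6))
      = 2 / 3 * (π / 4) ^ 3 - 2 / 45 * (π / 4) ^ 5 + 2 / 1575 * (π / 4) ^ 7 := by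
    have key : ∀ τ : ℝ, HasDerivAt (fun τ : ℝ =>
        2 / 3 * τ ^ 3 - 2 / 45 * τ ^ 5 + 2 / 1575 * τ ^ 7)
        (2 * τ ^ 2 - 2 / 9 * τ ^ 4 + 2 / 225 * τ ^ 6) τ := by
      intro τ
      have H := (((hasDerivAt_pow 3 τ).const_mul (2/3 : ℝ)).fun_sub
          ((hasDerivAt_pow 5 τ).const_mul (2/45 : ℝ))).fun_add
          ((hasDerivAt_pow 7 τ).const_mul (2/1575 : ℝ))
      refine H.congr_deriv ?_
      push_cast
      ring
    rw [intervalIntegral.integral_eq_sub_of_hasDerivAt (fun τ _ => key τ)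
      (by apply Continuous.intervalIntegrable; fun_prop)]
    norm_num
  -- monotonicity of the outer integral
  have hIlow : 2 / 3 * (π / 4) ^ 3 - 2 / 45 * (π / 4) ^ 5 + 2 / 1575 * (π / 4) ^ 7
        - 2 / 99225 * (π / 4) ^ 9
      ≤ ∫ τ in (0:ℝ)..(π / 4), ∫ v in (-(π / 2))..(π / 2),
          τ * Real.sin (τ * Real.cos v) := by
    rw [← houter_low]
    refine intervalIntegral.integral_mono_on ha ?_ hgint ?_
    · apply Continuous.intervalIntegrable; fun_prop
    · intro τ hτ
      exact hlow τ hτ.1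
  have hIhigh : (∫ τ in (0:ℝ)..(π / 4), ∫ v in (-(π / 2))..(π / 2),
          τ * Real.sin (τ * Real.cos v))
      ≤ 2 / 3 * (π / 4) ^ 3 - 2 / 45 * (π / 4) ^ 5 + 2 / 1575 * (π / 4) ^ 7 := by
    rw [← houter_high]
    refine intervalIntegral.integral_mono_on ha hgint ?_ ?_
    · apply Continuous.intervalIntegrable; fun_prop
    · intro τ hτ
      exact hhigh τ hτ.1
  -- numerical evaluation using bounds on π
  have hl : 3.141592 < π := Real.pi_gt_d6
  have hu : π < 3.141593 := Real.pi_lt_d6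
  have h4l : (97.409009:ℝ) < π ^ 4 :=
    lt_of_lt_of_le (by norm_num) (pow_lt_pow_left₀ hl (by norm_num) (by norm_num)).le
  have h4u : π ^ 4 < (97.409134:ℝ) :=
    lt_of_le_of_lt (pow_lt_pow_left₀ hu hpi.le (by norm_num)).le (by norm_num)
  have h6l : (961.387993:ℝ) < π ^ 6 :=
    lt_of_lt_of_le (by norm_num) (pow_lt_pow_left₀ hl (by norm_num) (by norm_num)).le
  have h6u : π ^ 6 < (961.389830:ℝ) :=
    lt_of_le_of_lt (pow_lt_pow_left₀ hu hpi.le (by norm_num)).le (by norm_num)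
  have h8l : (9488.515223:ℝ) < π ^ 8 :=
    lt_of_lt_of_le (by norm_num) (pow_lt_pow_left₀ hl (by norm_num) (by norm_num)).le
  have h8u : π ^ 8 < (9488.539387:ℝ) :=
    lt_of_le_of_lt (pow_lt_pow_left₀ hu hpi.le (by norm_num)).le (by norm_num)
  have h10u : π ^ 10 < (93648.150738:ℝ) :=
    lt_of_le_of_lt (pow_lt_pow_left₀ hu hpi.le (by norm_num)).le (by norm_num)
  constructor
  · have key : 1.9473 < 2 * π * (2 / 3 * (π / 4) ^ 3 - 2 / 45 * (π / 4) ^ 5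
        + 2 / 1575 * (π / 4) ^ 7 - 2 / 99225 * (π / 4) ^ 9) := by
      have heq : 2 * π * (2 / 3 * (π / 4) ^ 3 - 2 / 45 * (π / 4) ^ 5
          + 2 / 1575 * (π / 4) ^ 7 - 2 / 99225 * (π / 4) ^ 9)
          = π ^ 4 / 48 - π ^ 6 / 11520 + π ^ 8 / 6451200 - π ^ 10 / 6502809600 := by
        ring
      rw [heq]
      linarith [h4l, h6u, h8l, h10u]
    unfold ballVol
    have hm := mul_le_mul_of_nonneg_left hIlow (by positivity : (0:ℝ) ≤ 2 * π)
    linarith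
  · have key : 2 * π * (2 / 3 * (π / 4) ^ 3 - 2 / 45 * (π / 4) ^ 5
        + 2 / 1575 * (π / 4) ^ 7) < 1.9474 := by
      have heq : 2 * π * (2 / 3 * (π / 4) ^ 3 - 2 / 45 * (π / 4) ^ 5
          + 2 / 1575 * (π / 4) ^ 7)
          = π ^ 4 / 48 - π ^ 6 / 11520 + π ^ 8 / 6451200 := by
        ring
      rw [heq]
      linarith [h4u, h6l, h8u]
    unfold ballVol
    have hm := mul_le_mul_of_nonneg_left hIhigh (by positivity : (0:ℝ) ≤ 2 * π)
    linarith
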